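/- Let μ_y, a₁, a₂, a₃ be real numbers with a₂ > 0 and D := (μ_y² + a₁)·a₂ − a₃² > 0. Then the global minimum value of the function f(ω₁, ω₂) = (ω₁ − 1)² μ_y² + ω₁² a₁ + ω₂² a₂ − 2 ω₁ ω₂ a₃ over ℝ² equals μ_y² − a₂ μ_y⁴ / D; that is, the infimum of f over ℝ² is μ_y² − a₂ μ_y⁴ / ((μ_y² + a₁) a₂ − a₃²), and it is attained. -/

import Mathlib

/-- The MSE of the regression-type estimator `t₃` as a function of `ω₁, ω₂`:
`f(ω₁, ω₂) = (ω₁ − 1)² μ_y² + ω₁² a₁ + ω₂² a₂ − 2 ω₁ ω₂ a₃`. -/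
def mseT3 (μy a₁ a₂ a₃ ω₁ ω₂ : ℝ) : ℝ :=
  (ω₁ - 1) ^ 2 * μy ^ 2 + ω₁ ^ 2 * a₁ + ω₂ ^ 2 * a₂ - 2 * ω₁ * ω₂ * a₃

/-- with `a₂ > 0` and `D = (μ_y² + a₁)·a₂ − a₃² > 0`, the global minimum value of
`f(ω₁, ω₂) = (ω₁ − 1)² μ_y² + ω₁² a₁ + ω₂² a₂ − 2 ω₁ ω₂ a₃` over `ℝ²` equals
`μ_y² − a₂ μ_y⁴ / D`, and it is attained. -/
theorem mseT3_min_value (μy a₁ a₂ a₃ : ℝ) (ha₂ : 0 < a₂)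
    (hD : 0 < (μy ^ 2 + a₁) * a₂ - a₃ ^ 2) :
    IsLeast (Set.range fun p : ℝ × ℝ => mseT3 μy a₁ a₂ a₃ p.1 p.2)
      (μy ^ 2 - a₂ * μy ^ 4 / ((μy ^ 2 + a₁) * a₂ - a₃ ^ 2)) := by
  constructor
  · refine ⟨(a₂ * μy ^ 2 / ((μy ^ 2 + a₁) * a₂ - a₃ ^ 2),
      a₃ * μy ^ 2 / ((μy ^ 2 + a₁) * a₂ - a₃ ^ 2)), ?_⟩
    simp only [mseT3]
    field_simp [hD.ne', (by linarith : 0 < a₂ * (μy ^ 2 + a₁) - a₃ ^ 2).ne']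
    ring
  · rintro y ⟨p, rfl⟩
    simp only [mseT3]
    rw [sub_le_iff_le_add, ← sub_le_iff_le_add', le_div_iff₀ hD]
    nlinarith [mul_nonneg hD.le (sq_nonneg (a₂ * p.2 - a₃ * p.1)),
      sq_nonneg (((μy ^ 2 + a₁) * a₂ - a₃ ^ 2) * p.1 - a₂ * μy ^ 2), ha₂, hD]
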